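/- Let f : S¹ → S¹ be a homeomorphism of the circle whose set of non-wandering points is finite (and nonempty). Then the polynomial entropy of the induced map 2^f on the hyperspace 2^{S¹} of nonempty closed subsets of the circle is infinite. -/

import Mathlib

open Filter Topology TopologicalSpace Set
open scoped ENNReal

/-- The dynamic distance `d_n^f(x,y) = max_{0 ≤ k ≤ n-1} d(f^k x, f^k y)`. -/
noncomputable def dynDist {X : Type*} [MetricSpace X] (f : X → X) (n : ℕ) (x y : X) : ℝ :=
  ((Finset.range n).sup fun k => nndist (f^[k] x) (f^[k] y) : NNReal)

/-- A finite set `E` is `(n,ε)`-separated for `f`. -/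
def IsDynSeparated {X : Type*} [MetricSpace X] (f : X → X) (n : ℕ) (ε : ℝ) (E : Finset X) :
    Prop :=
  ∀ x ∈ E, ∀ y ∈ E, x ≠ y → ε ≤ dynDist f n x y

/-- `S(n,ε;Y)`: the maximal cardinality of an `(n,ε)`-separated subset of `Y`. -/
noncomputable def maxSep {X : Type*} [MetricSpace X] (f : X → X) (Y : Set X) (n : ℕ) (ε : ℝ) :
    ℕ :=
  sSup {m : ℕ | ∃ E : Finset X, ↑E ⊆ Y ∧ E.card = m ∧ IsDynSeparated f n ε E}

/-- The polynomial entropy `h_pol(f;Y)`.  Since `ε ↦ S(n,ε;Y)` is nonincreasing, the limit as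
`ε → 0` of the `limsup` coincides with the supremum over `ε > 0`. -/
noncomputable def polEnt {X : Type*} [MetricSpace X] (f : X → X) (Y : Set X) : ℝ≥0∞ :=
  ⨆ (ε : ℝ) (_ : 0 < ε),
    Filter.atTop.limsup fun n : ℕ =>
      ENNReal.ofReal (Real.log (maxSep f Y n ε) / Real.log n)

/-- The set of non-wandering points of `f`. -/
def nonWandering {X : Type*} [TopologicalSpace X] (f : X → X) : Set X :=
  {p | ∀ U ∈ nhds p, ∃ n : ℕ, 1 ≤ n ∧ (f^[n] '' U ∩ U).Nonempty}

/-- The induced map `2^f` on the hyperspace of nonempty closed (= compact) subsets of a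
compact metric space. -/
noncomputable def induced2 {X : Type*} [TopologicalSpace X] (f : X → X) (hf : Continuous f) :
    NonemptyCompacts X → NonemptyCompacts X :=
  fun A => ⟨⟨f '' A, A.isCompact.image hf⟩, A.nonempty.image f⟩

/-- The hyperspace `C(X)` of subcontinua (nonempty closed connected subsets) of `X`. -/
abbrev Subcontinua (X : Type*) [TopologicalSpace X] :=
  {A : NonemptyCompacts X // IsConnected (A : Set X)}

/-- The induced map `C(f)` on the hyperspace of subcontinua. -/
noncomputable def inducedC {X : Type*} [TopologicalSpace X] (f : X → X) (hf : Continuous f) :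
    Subcontinua X → Subcontinua X :=
  fun A => ⟨induced2 f hf A.1, A.2.image f hf.continuousOn⟩

/-- The `k`-fold symmetric product `X^{*k}`: nonempty subsets of `X` with at most `k` points. -/
abbrev SymProd (X : Type*) [TopologicalSpace X] (k : ℕ) :=
  {A : NonemptyCompacts X // (A : Set X).Finite ∧ (A : Set X).ncard ≤ k}

/-- The induced map `f^{*k}` on the `k`-fold symmetric product. -/
noncomputable def inducedSym {X : Type*} [TopologicalSpace X] (f : X → X) (hf : Continuous f)
    (k : ℕ) : SymProd X k → SymProd X k :=
  fun A => ⟨induced2 f hf A.1, A.2.1.image f, le_trans (Set.ncard_image_le A.2.1) A.2.2⟩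

/-- Sets `U 0, …, U (L-1)` are mutually singular for `f`. -/
def MutuallySingularSets {X : Type*} [TopologicalSpace X] (f : X → X) {L : ℕ}
    (U : Fin L → Set X) : Prop :=
  ∀ M : ℕ, ∃ x : X, ∃ n : Fin L → ℕ, (∀ j, 1 ≤ n j ∧ f^[n j] x ∈ U j) ∧
    ∀ i j, i ≠ j → (M : ℤ) < |(n i : ℤ) - (n j : ℤ)|

/-- A finite set `S ⊆ X \ NW(f)` is singular: it consists of mutually singular points, i.e.
every family of respective neighbourhoods of its points is mutually singular. -/
def IsSingularSet {X : Type*} [TopologicalSpace X] (f : X → X) (S : Set X) : Prop :=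
  S.Finite ∧ (∀ x ∈ S, x ∉ nonWandering f) ∧
  ∀ (L : ℕ) (x : Fin L → X), Function.Injective x → Set.range x = S →
    ∀ U : Fin L → Set X, (∀ j, U j ∈ nhds (x j)) → MutuallySingularSets f U

/-- The set of codings of length-`n` orbit segments of points of `Y` relative to the family
`F`, where the letter `none` stands for `Y_∞ = Y \ ⋃ F`. -/
def codings {X : Type*} (f : X → X) {L : ℕ} (F : Fin L → Set X) (Y : Set X) (n : ℕ) :
    Set (Fin n → Option (Fin L)) :=
  {w | ∃ x ∈ Y, ∀ j : Fin n, match w j with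
    | some i => f^[(j : ℕ)] x ∈ F i
    | none => f^[(j : ℕ)] x ∈ Y \ ⋃ i, F i}

/-- The polynomial entropy of `f` on `Y` relative to the family `F`:
`limsup_n log #A_n(F;Y) / log n`. -/
noncomputable def polEntRel {X : Type*} (f : X → X) {L : ℕ} (F : Fin L → Set X) (Y : Set X) :
    ℝ≥0∞ :=
  Filter.atTop.limsup fun n : ℕ =>
    ENNReal.ofReal (Real.log ((codings f F Y n).ncard) / Real.log n)

/-- The circle is connected. -/
theorem circle_isConnected_univ : IsConnected (Set.univ : Set Circle) := by
  have hsurj : Function.Surjective Circle.exp := fun z => ⟨Complex.arg z, Circle.exp_arg z⟩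
  have : ConnectedSpace Circle :=
    { toPreconnectedSpace := ⟨by
        rw [← Set.image_univ_of_surjective hsurj]
        exact isPreconnected_univ.image _ Circle.exp.continuous.continuousOn⟩,
      toNonempty := ⟨1⟩ }
  exact isConnected_univ


section AuxLemmas

open Metric

/-- In a compact metric space, `ε`-separated finite sets have uniformly bounded cardinality. -/
lemma aux_card_le_of_separated {Z : Type*} [MetricSpace Z] [CompactSpace Z] {ε : ℝ} (hε : 0 < ε) :
    ∃ M : ℕ, ∀ s : Finset Z, (∀ a ∈ s, ∀ b ∈ s, a ≠ b → ε ≤ dist a b) → s.card ≤ M := by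
  obtain ⟨t, -, htfin, hcov⟩ :=
    (isCompact_univ (X := Z)).finite_cover_balls (e := ε / 2) (by linarith : (0:ℝ) < ε / 2)
  refine ⟨htfin.toFinset.card, fun s hs => ?_⟩
  have hchoice : ∀ a : Z, ∃ y, y ∈ htfin.toFinset ∧ a ∈ ball y (ε / 2) := by
    intro a
    obtain ⟨y, hy, hay⟩ := Set.mem_iUnion₂.1 (hcov (Set.mem_univ a))
    exact ⟨y, htfin.mem_toFinset.2 hy, hay⟩
  choose c hc hcb using hchoice
  refine Finset.card_le_card_of_injOn c (fun a _ => hc a) ?_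
  intro a ha b hb hab
  by_contra hne
  have h1 : dist a (c a) < ε / 2 := mem_ball.1 (hcb a)
  have h2 : dist b (c b) < ε / 2 := mem_ball.1 (hcb b)
  have hsep := hs a ha b hb hne
  have htri : dist a b ≤ dist a (c a) + dist b (c a) := dist_triangle_right a b (c a)
  rw [hab] at htri h1
  linarith

lemma aux_induced2_iterate {X : Type*} [TopologicalSpace X] (f : X → X) (hf : Continuous f)
    (m : ℕ) (A : NonemptyCompacts X) :
    (((induced2 f hf)^[m] A : NonemptyCompacts X) : Set X) = f^[m] '' (A : Set X) := by
  induction m with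
  | zero => simp
  | succ m ih =>
    rw [Function.iterate_succ_apply' (induced2 f hf), Function.iterate_succ' f]
    show f '' (((induced2 f hf)^[m] A : NonemptyCompacts X) : Set X) = _
    rw [ih, Set.image_comp]

end AuxLemmas

-- STATEMENT 5
theorem stmt5 (f : Circle ≃ₜ Circle) (hNW : (nonWandering ⇑f).Finite)
    (hne : (nonWandering ⇑f).Nonempty) :
    polEnt (induced2 ⇑f f.continuous) Set.univ = ⊤ := by
  classical
  set F := induced2 ⇑f f.continuous with hF
  -- Circle is infinite
  have hinf : Infinite Circle := by
    have h1 : (Set.Ioc (-Real.pi) Real.pi).Infinite :=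
      Set.Ioc_infinite (by have := Real.pi_pos; linarith)
    have h2 : Infinite (Set.Ioc (-Real.pi) Real.pi) := Set.infinite_coe_iff.2 h1
    exact Circle.argEquiv.infinite_iff.2 h2
  -- a wandering point exists
  obtain ⟨x, hx⟩ : ∃ x : Circle, x ∉ nonWandering ⇑f := by
    by_contra h
    push_neg at h
    exact (Set.infinite_univ (α := Circle)).mono (fun y _ => h y) hNW
  -- a wandering ball around it
  have hx' : ¬ (∀ U ∈ nhds x, ∃ n : ℕ, 1 ≤ n ∧ ((⇑f)^[n] '' U ∩ U).Nonempty) := hx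
  push_neg at hx'
  obtain ⟨U, hU, hUdis⟩ := hx'
  obtain ⟨δ, hδ, hball⟩ := Metric.mem_nhds_iff.1 hU
  set B := Metric.ball x δ with hB
  -- the full orbit
  set e : Equiv.Perm Circle := f.toEquiv with he
  set φ : ℤ → Circle := fun z => (e ^ z) x with hφ
  have hcomp : ∀ w z : ℤ, (e ^ w) (φ z) = φ (z + w) := by
    intro w z
    simp only [hφ, ← Equiv.Perm.mul_apply, ← zpow_add, add_comm]
  have hφ0 : φ 0 = x := by simp [hφ]
  have hfiter : ∀ (m : ℕ) (y : Circle), (⇑f)^[m] y = (e ^ (m : ℤ)) y := by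
    intro m y
    rw [zpow_natCast]
    have : ⇑f = ⇑e := rfl
    rw [this, ← Equiv.Perm.iterate_eq_pow]
  have hφiter : ∀ (m : ℕ) (z : ℤ), (⇑f)^[m] (φ z) = φ (z + m) := by
    intro m z
    rw [hfiter m (φ z), hcomp]
  have hφfar : ∀ z : ℤ, z ≠ 0 → δ ≤ dist x (φ z) := by
    intro z hz
    by_contra hlt
    push_neg at hlt
    have hmem : φ z ∈ B := by
      rw [hB, Metric.mem_ball, dist_comm]
      exact hlt
    have hxB : x ∈ B := Metric.mem_ball_self hδ
    rcases lt_trichotomy z 0 with hneg | h0 | hpos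
    · -- z < 0 : x = f^[(-z).toNat] (φ z)
      set n := (-z).toNat with hn
      have hn1 : 1 ≤ n := by omega
      have hnz : (n : ℤ) = -z := by omega
      have : (⇑f)^[n] (φ z) = x := by
        rw [hφiter, hnz]
        simp [hφ0]
      exact absurd (hUdis n hn1)
        (Set.nonempty_iff_ne_empty.1 ⟨x, ⟨⟨φ z, hball hmem, this⟩, hball hxB⟩⟩)
    · exact hz h0
    · -- z > 0 : φ z = f^[z.toNat] x
      set n := z.toNat with hn
      have hn1 : 1 ≤ n := by omega
      have hnz : (n : ℤ) = z := by omega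
      have : (⇑f)^[n] x = φ z := by
        rw [← hφ0, hφiter, zero_add, hnz]
      exact absurd (hUdis n hn1)
        (Set.nonempty_iff_ne_empty.1 ⟨φ z, ⟨⟨x, hball hxB, this⟩, hball hmem⟩⟩)
  have hφinj : Function.Injective φ := by
    intro a b hab
    by_contra hne
    have h1 : (e ^ (-a)) (φ a) = φ 0 := by rw [hcomp, add_neg_cancel]
    have h2 : (e ^ (-a)) (φ b) = φ (b - a) := by rw [hcomp, ← sub_eq_add_neg]
    have : φ 0 = φ (b - a) := by rw [← h1, ← h2, hab]
    have hfar := hφfar (b - a) (sub_ne_zero.2 (Ne.symm hne))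
    rw [← this, hφ0, dist_self] at hfar
    linarith
  -- the family of finite sets
  set ψ : ℕ → Circle := fun s => φ (-(s : ℤ)) with hψ
  have hψinj : Function.Injective ψ := by
    intro a b hab
    have := hφinj hab
    omega
  set A : Finset ℕ → NonemptyCompacts Circle := fun S =>
    ⟨⟨(((insert 0 S).image ψ : Finset Circle) : Set Circle),
      ((insert 0 S).image ψ).finite_toSet.isCompact⟩,
      Finset.coe_nonempty.2 (Finset.Nonempty.image (Finset.insert_nonempty 0 S) ψ)⟩ with hA
  have hAco : ∀ S : Finset ℕ,
      (A S : Set Circle) = ↑((insert 0 S).image ψ) := fun S => rfl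
  have hFiter : ∀ (m : ℕ) (C : NonemptyCompacts Circle),
      ((F^[m] C : NonemptyCompacts Circle) : Set Circle) = (⇑f)^[m] '' (C : Set Circle) :=
    fun m C => aux_induced2_iterate ⇑f f.continuous m C
  -- the key separation estimate
  have hdist : ∀ S T : Finset ℕ, ∀ s0, s0 ∈ S → 1 ≤ s0 → s0 ∉ T →
      δ ≤ dist (F^[s0] (A S)) (F^[s0] (A T)) := by
    intro S T s0 hs0S hs01 hs0T
    have hxmem : x ∈ (⇑f)^[s0] '' (A S : Set Circle) := by
      refine ⟨ψ s0, ?_, ?_⟩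
      · rw [hAco]
        exact_mod_cast Finset.mem_image_of_mem ψ (Finset.mem_insert_of_mem hs0S)
      · show (⇑f)^[s0] (φ (-(s0:ℤ))) = x
        rw [hφiter]
        simpa using hφ0
    have hfar2 : ∀ y ∈ (⇑f)^[s0] '' (A T : Set Circle), δ ≤ dist x y := by
      rintro y ⟨p, hp, rfl⟩
      rw [hAco] at hp
      obtain ⟨t, ht, rfl⟩ := Finset.mem_image.1 (by exact_mod_cast hp)
      show δ ≤ dist x ((⇑f)^[s0] (φ (-(t:ℤ))))
      rw [hφiter]
      apply hφfar
      rcases Finset.mem_insert.1 ht with rfl | htT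
      · simp
        omega
      · intro hc
        apply hs0T
        have hts : t = s0 := by omega
        rwa [hts] at htT
    have hTne : ((⇑f)^[s0] '' (A T : Set Circle)).Nonempty := (A T).nonempty.image _
    have hinfd : δ ≤ Metric.infDist x ((⇑f)^[s0] '' (A T : Set Circle)) := by
      by_contra hlt
      push_neg at hlt
      obtain ⟨y, hy, hylt⟩ := (Metric.infDist_lt_iff hTne).1 hlt
      exact absurd hylt (not_lt.2 (hfar2 y hy))
    have hfin : EMetric.hausdorffEdist ((⇑f)^[s0] '' (A S : Set Circle))
        ((⇑f)^[s0] '' (A T : Set Circle)) ≠ ⊤ := by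
      rw [← hFiter, ← hFiter]
      exact Metric.hausdorffEdist_ne_top_of_nonempty_of_bounded (F^[s0] (A S)).nonempty
        (F^[s0] (A T)).nonempty (F^[s0] (A S)).isCompact.isBounded
        (F^[s0] (A T)).isCompact.isBounded
    calc δ ≤ Metric.infDist x ((⇑f)^[s0] '' (A T : Set Circle)) := hinfd
      _ ≤ Metric.hausdorffDist ((⇑f)^[s0] '' (A S : Set Circle))
            ((⇑f)^[s0] '' (A T : Set Circle)) :=
          Metric.infDist_le_hausdorffDist_of_mem hxmem hfin
      _ = dist (F^[s0] (A S)) (F^[s0] (A T)) := by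
          rw [Metric.NonemptyCompacts.dist_eq, hFiter, hFiter]
  -- from a one-time estimate to the dynamical distance
  have hdyn : ∀ (n : ℕ) (a b : NonemptyCompacts Circle) (s0 : ℕ), s0 < n →
      δ ≤ dist (F^[s0] a) (F^[s0] b) → δ ≤ dynDist F n a b := by
    intro n a b s0 hs0 h
    have h1 : (⟨δ, hδ.le⟩ : NNReal) ≤ nndist (F^[s0] a) (F^[s0] b) := by
      apply NNReal.coe_le_coe.1
      rw [coe_nndist]
      exact h
    calc δ = ((⟨δ, hδ.le⟩ : NNReal) : ℝ) := rfl
      _ ≤ (((Finset.range n).sup fun k => nndist (F^[k] a) (F^[k] b) : NNReal) : ℝ) :=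
          NNReal.coe_le_coe.2 (le_trans h1
            (Finset.le_sup (f := fun k => nndist (F^[k] a) (F^[k] b))
              (Finset.mem_range.2 hs0)))
      _ = dynDist F n a b := rfl
  have hdynsymm : ∀ (n : ℕ) (a b : NonemptyCompacts Circle),
      dynDist F n a b = dynDist F n b a := by
    intro n a b
    unfold dynDist
    congr 1
    apply Finset.sup_congr rfl
    intro k _
    exact nndist_comm _ _
  -- boundedness of separated cardinalities
  have hbdd : ∀ n : ℕ, 1 ≤ n → BddAbove {m : ℕ | ∃ E : Finset (NonemptyCompacts Circle),
      ↑E ⊆ (Set.univ : Set (NonemptyCompacts Circle)) ∧ E.card = m ∧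
      IsDynSeparated F n δ E} := by
    intro n hn
    obtain ⟨M, hM⟩ := aux_card_le_of_separated (Z := Fin n → NonemptyCompacts Circle) hδ
    refine ⟨M, fun m hm => ?_⟩
    obtain ⟨E, -, rfl, hsep⟩ := hm
    set ι : NonemptyCompacts Circle → (Fin n → NonemptyCompacts Circle) :=
      fun a j => F^[(j : ℕ)] a with hι
    have hιinj : Function.Injective ι := by
      intro a b hab
      have := congrFun hab ⟨0, by omega⟩
      simpa [hι] using this
    rw [← Finset.card_image_of_injective E hιinj]
    apply hM
    intro u hu v hv huv
    obtain ⟨a, ha, rfl⟩ := Finset.mem_image.1 hu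
    obtain ⟨b, hb, rfl⟩ := Finset.mem_image.1 hv
    have hab : a ≠ b := fun hEq => huv (by rw [hEq])
    have h1 : δ ≤ dynDist F n a b := hsep a ha b hb hab
    obtain ⟨k, hk, hkeq⟩ := Finset.exists_mem_eq_sup (Finset.range n)
      ⟨0, Finset.mem_range.2 (by omega)⟩ (fun k => nndist (F^[k] a) (F^[k] b))
    have h2 : δ ≤ dist (F^[k] a) (F^[k] b) := by
      have heq2 : dynDist F n a b = ((nndist (F^[k] a) (F^[k] b) : NNReal) : ℝ) := by
        unfold dynDist
        exact_mod_cast congrArg NNReal.toReal hkeq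
      rw [heq2, coe_nndist] at h1
      exact h1
    have hkn : (k : ℕ) < n := Finset.mem_range.1 hk
    calc δ ≤ dist (ι a ⟨k, hkn⟩) (ι b ⟨k, hkn⟩) := h2
      _ ≤ dist (ι a) (ι b) := dist_le_pi_dist (ι a) (ι b) _
  -- the exponential lower bound on maxSep
  have hmax : ∀ N : ℕ, (2:ℕ)^N ≤ maxSep F Set.univ (N+1) δ := by
    intro N
    set E : Finset (NonemptyCompacts Circle) := (Finset.Icc 1 N).powerset.image A with hE
    have hAinj : Set.InjOn A ((Finset.Icc 1 N).powerset : Set (Finset ℕ)) := by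
      intro S hS T hT hST
      rw [Finset.mem_coe, Finset.mem_powerset] at hS hT
      have hsets : (A S : Set Circle) = (A T : Set Circle) := by rw [hST]
      rw [hAco, hAco] at hsets
      have hfs : (insert 0 S).image ψ = (insert 0 T).image ψ := Finset.coe_injective hsets
      have hins : insert 0 S = insert 0 T := Finset.image_injective hψinj hfs
      have h0S : 0 ∉ S := fun h => by have := Finset.mem_Icc.1 (hS h); omega
      have h0T : 0 ∉ T := fun h => by have := Finset.mem_Icc.1 (hT h); omega
      rw [← Finset.erase_insert h0S, ← Finset.erase_insert h0T, hins]
    have hcard : E.card = 2^N := by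
      rw [hE, Finset.card_image_of_injOn hAinj, Finset.card_powerset, Nat.card_Icc]
      simp
    have hsepE : IsDynSeparated F (N+1) δ E := by
      intro a ha b hb hab
      obtain ⟨S, hS, rfl⟩ := Finset.mem_image.1 ha
      obtain ⟨T, hT, rfl⟩ := Finset.mem_image.1 hb
      rw [Finset.mem_powerset] at hS hT
      have hST : S ≠ T := fun h => hab (by rw [h])
      by_cases hcase : ∃ s0 ∈ S, s0 ∉ T
      · obtain ⟨s0, hs0S, hs0T⟩ := hcase
        have hs01 : 1 ≤ s0 := (Finset.mem_Icc.1 (hS hs0S)).1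
        have hs0N : s0 ≤ N := (Finset.mem_Icc.1 (hS hs0S)).2
        exact hdyn (N+1) _ _ s0 (by omega) (hdist S T s0 hs0S hs01 hs0T)
      · push_neg at hcase
        have hT' : ∃ t0 ∈ T, t0 ∉ S := by
          by_contra hh
          push_neg at hh
          exact hST (Finset.Subset.antisymm hcase hh)
        obtain ⟨t0, ht0T, ht0S⟩ := hT'
        have ht01 : 1 ≤ t0 := (Finset.mem_Icc.1 (hT ht0T)).1
        have ht0N : t0 ≤ N := (Finset.mem_Icc.1 (hT ht0T)).2
        rw [hdynsymm]
        exact hdyn (N+1) _ _ t0 (by omega) (hdist T S t0 ht0T ht01 ht0S)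
    have hmem : (2:ℕ)^N ∈ {m : ℕ | ∃ E' : Finset (NonemptyCompacts Circle),
        ↑E' ⊆ (Set.univ : Set (NonemptyCompacts Circle)) ∧ E'.card = m ∧
        IsDynSeparated F (N+1) δ E'} :=
      ⟨E, by simp, hcard, hsepE⟩
    unfold maxSep
    exact le_csSup (hbdd (N+1) (by omega)) hmem
  -- the limsup is infinite
  have hlim : ∀ m : ℕ, (m : ℝ≥0∞) ≤ Filter.atTop.limsup
      (fun n : ℕ => ENNReal.ofReal (Real.log (maxSep F Set.univ n δ) / Real.log n)) := by
    intro m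
    have hlittle := (isLittleO_pow_const_const_pow_of_one_lt (R := ℝ) m
      (by norm_num : (1:ℝ) < 2)).def (by norm_num : (0:ℝ) < 1/2)
    have hev : ∀ᶠ n : ℕ in atTop, (m : ℝ≥0∞) ≤
        ENNReal.ofReal (Real.log (maxSep F Set.univ n δ) / Real.log n) := by
      filter_upwards [hlittle, eventually_ge_atTop 2] with n hlit hn2
      rw [Real.norm_eq_abs, Real.norm_eq_abs, abs_of_nonneg (by positivity),
        abs_of_nonneg (by positivity)] at hlit
      have h2n : (2:ℝ)^n = 2^(n-1) * 2 := by
        rw [← pow_succ]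
        congr 1
        omega
      have hpow : ((n:ℝ))^m ≤ (2:ℝ)^(n-1) := by
        rw [h2n] at hlit
        linarith
      have hms : (2:ℕ)^(n-1) ≤ maxSep F Set.univ n δ := by
        have := hmax (n-1)
        rwa [Nat.sub_add_cancel (by omega)] at this
      have hmsR : ((n:ℝ))^m ≤ (maxSep F Set.univ n δ : ℝ) := by
        calc ((n:ℝ))^m ≤ (2:ℝ)^(n-1) := hpow
          _ = (((2:ℕ)^(n-1) : ℕ) : ℝ) := by push_cast; ring
          _ ≤ _ := Nat.cast_le.2 hms
      have hn1R : (1:ℝ) < (n:ℝ) := by exact_mod_cast (by omega : 1 < n)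
      have hlogn : 0 < Real.log n := Real.log_pos hn1R
      have hposnm : (0:ℝ) < ((n:ℝ))^m := by positivity
      have hlog : (m:ℝ) * Real.log n ≤ Real.log (maxSep F Set.univ n δ) := by
        have hll := Real.log_le_log hposnm hmsR
        rwa [Real.log_pow] at hll
      have hdiv : (m:ℝ) ≤ Real.log (maxSep F Set.univ n δ) / Real.log n :=
        (le_div_iff₀ hlogn).2 hlog
      calc (m : ℝ≥0∞) = ENNReal.ofReal (m:ℝ) := (ENNReal.ofReal_natCast m).symm
        _ ≤ _ := ENNReal.ofReal_le_ofReal hdiv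
    exact le_limsup_of_frequently_le' hev.frequently
  have htop : Filter.atTop.limsup
      (fun n : ℕ => ENNReal.ofReal (Real.log (maxSep F Set.univ n δ) / Real.log n)) = ⊤ := by
    by_contra h
    obtain ⟨m, hm⟩ := ENNReal.exists_nat_gt h
    exact absurd (hlim m) (not_le.2 hm)
  rw [eq_top_iff, ← htop]
  unfold polEnt
  exact le_iSup₂_of_le δ hδ le_rfl
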